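/- Let Ω ∈ R^{N×m}, A ∈ R^{N×N}, and let U be an orthogonal m×m matrix with last column u. Then the column space of [(AΩU)_{−m}, (ΩU)_{−m}] equals the column space of [AΩ(I − uu^T), Ω(I − uu^T)]; in particular it depends on U only through u. -/

import Mathlib

open Matrix

private lemma range_fromColumns' {N n k : ℕ} (X : Matrix (Fin N) (Fin n) ℝ)
    (Y : Matrix (Fin N) (Fin k) ℝ) :
    LinearMap.range (Matrix.toLin' (Matrix.fromCols X Y))
      = LinearMap.range (Matrix.toLin' X) ⊔ LinearMap.range (Matrix.toLin' Y) := by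
  apply le_antisymm
  · rintro x ⟨v, rfl⟩
    have hv : v = Sum.elim (v ∘ Sum.inl) (v ∘ Sum.inr) := by ext (i | i) <;> rfl
    rw [Matrix.toLin'_apply, hv, Matrix.fromCols_mulVec_sumElim]
    exact Submodule.add_mem_sup ⟨_, rfl⟩ ⟨_, rfl⟩
  · rw [sup_le_iff]
    constructor
    · rintro x ⟨v, rfl⟩
      refine ⟨Sum.elim v 0, ?_⟩
      rw [Matrix.toLin'_apply, Matrix.fromCols_mulVec_sumElim]
      simp [Matrix.toLin'_apply]
    · rintro x ⟨v, rfl⟩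
      refine ⟨Sum.elim 0 v, ?_⟩
      rw [Matrix.toLin'_apply, Matrix.fromCols_mulVec_sumElim]
      simp [Matrix.toLin'_apply]

private lemma range_mul_surj {n N : ℕ} (M : Matrix (Fin N) (Fin n) ℝ)
    (P : Matrix (Fin n) (Fin n) ℝ) (Q : Matrix (Fin n) (Fin n) ℝ) (hPQ : P * Q = 1) :
    LinearMap.range (Matrix.toLin' (M * P)) = LinearMap.range (Matrix.toLin' M) := by
  have hs : Function.Surjective (Matrix.toLin' P) := by
    intro y
    refine ⟨Matrix.toLin' Q y, ?_⟩
    have := congrArg (fun R => Matrix.toLin' R y) hPQ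
    simpa [Matrix.toLin'_mul, LinearMap.comp_apply] using this
  rw [Matrix.toLin'_mul, LinearMap.range_comp, LinearMap.range_eq_top.mpr hs,
    Submodule.map_top]

private lemma mulVec_deflate {N m : ℕ} (M : Matrix (Fin N) (Fin (m + 1)) ℝ)
    (w : Fin (m + 1) → ℝ) :
    (M * (1 - vecMulVec (Pi.single (Fin.last m) (1 : ℝ)) (Pi.single (Fin.last m) 1))) *ᵥ w
      = (M.submatrix id (Fin.castSucc : Fin m → Fin (m + 1))) *ᵥ (w ∘ Fin.castSucc) := by
  rw [← Matrix.mulVec_mulVec]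
  funext i
  have hw : ((1 - vecMulVec (Pi.single (Fin.last m) (1 : ℝ)) (Pi.single (Fin.last m) 1)) *ᵥ w)
      = fun j => w j - (Pi.single (Fin.last m) 1 : Fin (m + 1) → ℝ) j * w (Fin.last m) := by
    funext j
    simp [Matrix.sub_mulVec, Matrix.mulVec, dotProduct, vecMulVec_apply, Pi.single_apply,
      Matrix.one_apply, Finset.sum_sub_distrib, Finset.sum_ite_eq', mul_ite, ite_mul, mul_sub,
      mul_comm]
  rw [hw]
  simp only [Matrix.mulVec, dotProduct, Matrix.submatrix_apply, id_eq, Function.comp_apply]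
  rw [Fin.sum_univ_castSucc]
  have : ∀ j : Fin m, (Pi.single (Fin.last m) 1 : Fin (m + 1) → ℝ) (Fin.castSucc j) = 0 := by
    intro j
    simp [Pi.single_apply, Fin.castSucc_lt_last j, (Fin.castSucc_lt_last j).ne]
  simp [this]

private lemma range_deflate {N m : ℕ} (M : Matrix (Fin N) (Fin (m + 1)) ℝ) :
    LinearMap.range (Matrix.toLin'
        (M.submatrix id (Fin.castSucc : Fin m → Fin (m + 1))))
      = LinearMap.range (Matrix.toLin'
        (M * (1 - vecMulVec (Pi.single (Fin.last m) (1 : ℝ)) (Pi.single (Fin.last m) 1)))) := by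
  apply le_antisymm
  · rintro x ⟨v, rfl⟩
    refine ⟨Fin.snoc v 0, ?_⟩
    rw [Matrix.toLin'_apply, Matrix.toLin'_apply, mulVec_deflate]
    congr 1 <;> simp
  · rintro x ⟨v, rfl⟩
    exact ⟨v ∘ Fin.castSucc, by rw [Matrix.toLin'_apply, Matrix.toLin'_apply, mulVec_deflate]⟩

theorem colspace_leaveOneOutFull_depends_on_last_column
    {N m : ℕ} (A : Matrix (Fin N) (Fin N) ℝ)
    (Ω : Matrix (Fin N) (Fin (m + 1)) ℝ)
    (U : Matrix (Fin (m + 1)) (Fin (m + 1)) ℝ)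
    (hU : U ∈ Matrix.orthogonalGroup (Fin (m + 1)) ℝ)
    (u : Fin (m + 1) → ℝ) (hu : u = fun i => U i (Fin.last m)) :
    LinearMap.range (Matrix.toLin' (Matrix.fromCols
        ((A * Ω * U).submatrix id (Fin.castSucc : Fin m → Fin (m + 1)))
        ((Ω * U).submatrix id (Fin.castSucc : Fin m → Fin (m + 1)))))
      = LinearMap.range (Matrix.toLin' (Matrix.fromCols
        (A * Ω * (1 - vecMulVec u u))
        (Ω * (1 - vecMulVec u u)))) := by
  set e : Fin (m + 1) → ℝ := Pi.single (Fin.last m) 1 with he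
  have hUUt : U * Uᵀ = 1 := by
    have := (Matrix.mem_orthogonalGroup_iff _ _).mp hU
    simpa [Matrix.star_eq_conjTranspose] using this
  have hUtU : Uᵀ * U = 1 := by
    have := (Matrix.mem_orthogonalGroup_iff' _ _).mp hU
    simpa [Matrix.star_eq_conjTranspose] using this
  -- key algebraic identity: 1 - u uᵀ = U * (1 - e eᵀ) * Uᵀ
  have key : (1 : Matrix (Fin (m+1)) (Fin (m+1)) ℝ) - vecMulVec u u
      = U * (1 - vecMulVec e e) * Uᵀ := by
    have h1 : U * vecMulVec e e * Uᵀ = vecMulVec u u := by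
      ext i j
      simp only [Matrix.mul_apply, vecMulVec_apply, hu, he, Pi.single_apply]
      simp [mul_ite, ite_mul, Matrix.transpose_apply]
    rw [Matrix.mul_sub, Matrix.sub_mul, Matrix.mul_one, hUUt, h1]
  rw [range_fromColumns', range_fromColumns', key,
    show A * Ω * (U * (1 - vecMulVec e e) * Uᵀ) = (A * Ω * U * (1 - vecMulVec e e)) * Uᵀ by
      simp [Matrix.mul_assoc],
    show Ω * (U * (1 - vecMulVec e e) * Uᵀ) = (Ω * U * (1 - vecMulVec e e)) * Uᵀ by simp [Matrix.mul_assoc],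
    range_mul_surj _ Uᵀ U hUtU, range_mul_surj _ Uᵀ U hUtU,
    range_deflate, range_deflate]
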